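/- The function κ is differentiable at the point (a*, 1) with a* = 5/2, and its partial derivatives there satisfy (∂κ/∂a)(5/2, 1) = 0 and (5/2)·(∂κ/∂b)(5/2, 1) = (1/2) log(9/5). -/

import Mathlib

noncomputable def fab (a b : ℝ) (p : ℝ × ℝ) : ℝ :=
  b * Real.log b - 2 * p.1 * Real.log p.1
    + ((a + 1 - b) / 2) * Real.log ((a + 1 - b) / 2)
    - ((a + 1 - b) / 2 - p.1) * Real.log ((a + 1 - b) / 2 - p.1)
    - 2 * p.2 * Real.log p.2
    - (b - p.1 - p.2) * Real.log (b - p.1 - p.2)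
    + ((a - 1 - b) / 2) * Real.log ((a - 1 - b) / 2)
    - ((a - 1 - b) / 2 - p.2) * Real.log ((a - 1 - b) / 2 - p.2)

/-- The domain `D_{a,b}` of `f_{a,b}`. -/
def Dab (a b : ℝ) : Set (ℝ × ℝ) :=
  {p | 0 ≤ p.1 ∧ 0 ≤ p.2 ∧ p.1 + p.2 ≤ b ∧ p.1 ≤ (a + 1 - b) / 2 ∧ p.2 ≤ (a - 1 - b) / 2}

/-- The entropy per step `κ(a,b) = (1/a) · sup_{(δ,ε) ∈ D_{a,b}} f_{a,b}(δ,ε)`. -/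
noncomputable def kappa (a b : ℝ) : ℝ := (1 / a) * sSup (fab a b '' Dab a b)

open Real

section Aux

lemma key_ineq (w c : ℝ) (hw : 0 ≤ w) (hc : 0 < c) : w * log c - w * log w ≤ c - w := by
  rcases eq_or_lt_of_le hw with h | h
  · simp [← h]; linarith
  · have hlog : log c - log w = log (c / w) := (Real.log_div hc.ne' h.ne').symm
    have h2 : log (c / w) ≤ c / w - 1 := Real.log_le_sub_one_of_pos (div_pos hc h)
    have : w * log c - w * log w = w * log (c / w) := by rw [← hlog]; ring
    rw [this]
    calc w * log (c / w) ≤ w * (c / w - 1) := by nlinarith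
    _ = c - w := by field_simp

lemma bin_ent (A d x : ℝ) (hd : 0 ≤ d) (hdA : d ≤ A) (hA : 0 < A) (hx : 0 < x) :
    A * log A - d * log d - (A - d) * log (A - d) ≤ A * log (1 + x) - d * log x := by
  have h1x : (0:ℝ) < 1 + x := by linarith
  have h1 := key_ineq d (A * x / (1 + x)) hd (by positivity)
  have h2 := key_ineq (A - d) (A / (1 + x)) (by linarith) (by positivity)
  have e1 : log (A * x / (1 + x)) = log A + log x - log (1 + x) := by
    rw [Real.log_div (by positivity) h1x.ne', Real.log_mul hA.ne' hx.ne']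
  have e2 : log (A / (1 + x)) = log A - log (1 + x) := Real.log_div hA.ne' h1x.ne'
  rw [e1] at h1; rw [e2] at h2
  have e3 : A * x / (1 + x) + A / (1 + x) = A := by field_simp; ring
  nlinarith [h1, h2]

lemma trin_ent (b d e u v : ℝ) (hd : 0 ≤ d) (he : 0 ≤ e) (hde : d + e ≤ b) (hb : 0 < b)
    (hu : 0 < u) (hv : 0 < v) :
    b * log b - d * log d - e * log e - (b - d - e) * log (b - d - e)
      ≤ b * log (1 + u + v) - d * log u - e * log v := by
  have h1uv : (0:ℝ) < 1 + u + v := by linarith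
  have h1 := key_ineq d (b * u / (1 + u + v)) hd (by positivity)
  have h2 := key_ineq e (b * v / (1 + u + v)) he (by positivity)
  have h3 := key_ineq (b - d - e) (b / (1 + u + v)) (by linarith) (by positivity)
  have e1 : log (b * u / (1 + u + v)) = log b + log u - log (1 + u + v) := by
    rw [Real.log_div (by positivity) h1uv.ne', Real.log_mul hb.ne' hu.ne']
  have e2 : log (b * v / (1 + u + v)) = log b + log v - log (1 + u + v) := by
    rw [Real.log_div (by positivity) h1uv.ne', Real.log_mul hb.ne' hv.ne']
  have e3 : log (b / (1 + u + v)) = log b - log (1 + u + v) := Real.log_div hb.ne' h1uv.ne'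
  rw [e1] at h1; rw [e2] at h2; rw [e3] at h3
  have e4 : b * u / (1 + u + v) + b * v / (1 + u + v) + b / (1 + u + v) = b := by
    field_simp; ring
  nlinarith [h1, h2, h3]

/-- Upper bound for `fab` on the domain. -/
lemma fab_le_U (a b : ℝ) (hb : 0 < b) (hA : 0 < (a + 1 - b) / 2) (hB : 0 < (a - 1 - b) / 2)
    (q : ℝ × ℝ) (hq : q ∈ Dab a b) :
    fab a b q ≤ ((a + 1 - b) / 2) * log (5/3) + ((a - 1 - b) / 2) * log 3 + b * log 3 := by
  obtain ⟨h1, h2, h3, h4, h5⟩ := hq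
  set d := q.1; set e := q.2
  set A := (a + 1 - b) / 2; set B := (a - 1 - b) / 2
  have hbin1 := bin_ent A d (2/3) h1 h4 hA (by norm_num)
  have hbin2 := bin_ent B e 2 h2 h5 hB (by norm_num)
  have htri := trin_ent b d e (3/2) (1/2) h1 h2 h3 hb (by norm_num) (by norm_num)
  rw [show (1:ℝ) + 3/2 + 1/2 = 3 by norm_num] at htri
  rw [show (1:ℝ) + 2/3 = 5/3 by norm_num] at hbin1
  rw [show (1:ℝ) + 2 = 3 by norm_num] at hbin2
  have l1 : log (3/2 : ℝ) = log 3 - log 2 := Real.log_div (by norm_num) (by norm_num)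
  have l2 : log (1/2 : ℝ) = - log 2 := by rw [one_div, Real.log_inv]
  have l3 : log (2/3 : ℝ) = log 2 - log 3 := Real.log_div (by norm_num) (by norm_num)
  rw [l1, l2] at htri; rw [l3] at hbin1
  have : fab a b q = (b * log b - d * log d - e * log e - (b - d - e) * log (b - d - e))
      + (A * log A - d * log d - (A - d) * log (A - d))
      + (B * log B - e * log e - (B - e) * log (B - e)) := by
    simp only [fab]; ring
  rw [this]
  nlinarith [htri, hbin1, hbin2]

/-- chain rule for `t ↦ t log t` composed with a function. -/
lemma mulLog_comp {α : ℝ × ℝ → ℝ} {C : ℝ × ℝ →L[ℝ] ℝ} {pt : ℝ × ℝ}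
    (hα : HasFDerivAt α C pt) (h : α pt ≠ 0) :
    HasFDerivAt (fun p => α p * Real.log (α p)) ((Real.log (α pt) + 1) • C) pt :=
  (Real.hasDerivAt_mul_log h).comp_hasFDerivAt pt hα

/-- The common derivative at `(5/2, 1)`. -/
noncomputable def cL : ℝ × ℝ →L[ℝ] ℝ :=
  (Real.log 5 / 2) • ContinuousLinearMap.fst ℝ ℝ ℝ
    + (Real.log (9/5) / 2) • ContinuousLinearMap.snd ℝ ℝ ℝ

lemma log54 : Real.log (5/4) = Real.log 5 - 2 * Real.log 2 := by
  rw [show (5/4:ℝ) = 5 / 2^2 by norm_num, Real.log_div (by norm_num) (by positivity),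
    Real.log_pow]; push_cast; ring

lemma log34 : Real.log (3/4) = Real.log 3 - 2 * Real.log 2 := by
  rw [show (3/4:ℝ) = 3 / 2^2 by norm_num, Real.log_div (by norm_num) (by positivity),
    Real.log_pow]; push_cast; ring

lemma log13 : Real.log (1/3:ℝ) = - Real.log 3 := by rw [one_div, Real.log_inv]

lemma log14 : Real.log (1/4:ℝ) = - (2 * Real.log 2) := by
  rw [show (1/4:ℝ) = (2^2)⁻¹ by norm_num, Real.log_inv, Real.log_pow]; push_cast; ring

lemma log112 : Real.log (1/12:ℝ) = - (2 * Real.log 2) - Real.log 3 := by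
  rw [show (1/12:ℝ) = (2^2 * 3)⁻¹ by norm_num, Real.log_inv,
    Real.log_mul (by positivity) (by norm_num), Real.log_pow]; push_cast; ring

lemma log12 : Real.log (1/2:ℝ) = - Real.log 2 := by rw [one_div, Real.log_inv]

lemma log16 : Real.log (1/6:ℝ) = - (Real.log 2 + Real.log 3) := by
  rw [show (1/6:ℝ) = (2 * 3)⁻¹ by norm_num, Real.log_inv,
    Real.log_mul (by norm_num) (by norm_num)]

lemma log53 : Real.log (5/3:ℝ) = Real.log 5 - Real.log 3 :=
  Real.log_div (by norm_num) (by norm_num)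

lemma log95 : Real.log (9/5:ℝ) = 2 * Real.log 3 - Real.log 5 := by
  rw [show (9/5:ℝ) = 3^2 / 5 by norm_num, Real.log_div (by positivity) (by norm_num),
    Real.log_pow]; push_cast; ring

/-- lower comparison function. -/
noncomputable def Lfun (p : ℝ × ℝ) : ℝ := fab p.1 p.2 (1/2, 1/6)

/-- upper comparison function. -/
noncomputable def Ufun (p : ℝ × ℝ) : ℝ :=
  ((p.1 + 1 - p.2) / 2) * log (5/3) + ((p.1 - 1 - p.2) / 2) * log 3 + p.2 * log 3

/-- candidate sup. -/
noncomputable def Sfun (p : ℝ × ℝ) : ℝ := sSup (fab p.1 p.2 '' Dab p.1 p.2)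

set_option maxHeartbeats 1000000 in
lemma hL_deriv : HasFDerivAt Lfun cL ((5/2:ℝ), (1:ℝ)) := by
  have hA : HasFDerivAt (fun p : ℝ × ℝ => (p.1 + 1 - p.2) * (2:ℝ)⁻¹)
      ((2:ℝ)⁻¹ • (ContinuousLinearMap.fst ℝ ℝ ℝ - ContinuousLinearMap.snd ℝ ℝ ℝ)) ((5/2:ℝ), (1:ℝ)) :=
    ((hasFDerivAt_fst.add_const (1:ℝ)).sub hasFDerivAt_snd).mul_const ((2:ℝ)⁻¹)
  have hB : HasFDerivAt (fun p : ℝ × ℝ => (p.1 - 1 - p.2) * (2:ℝ)⁻¹)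
      ((2:ℝ)⁻¹ • (ContinuousLinearMap.fst ℝ ℝ ℝ - ContinuousLinearMap.snd ℝ ℝ ℝ)) ((5/2:ℝ), (1:ℝ)) :=
    ((hasFDerivAt_fst.sub_const (1:ℝ)).sub hasFDerivAt_snd).mul_const ((2:ℝ)⁻¹)
  have hs : HasFDerivAt (fun p : ℝ × ℝ => p.2 - 1/2 - 1/6)
      (ContinuousLinearMap.snd ℝ ℝ ℝ) ((5/2:ℝ), (1:ℝ)) :=
    (hasFDerivAt_snd.sub_const (1/2:ℝ)).sub_const (1/6:ℝ)
  have e1 := mulLog_comp (pt := ((5/2:ℝ), (1:ℝ))) hasFDerivAt_snd (by norm_num)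
  have e3 := mulLog_comp hA (by norm_num)
  have e4 := mulLog_comp (hA.sub_const (1/2:ℝ)) (by norm_num)
  have e6 := mulLog_comp hs (by norm_num)
  have e7 := mulLog_comp hB (by norm_num)
  have e8 := mulLog_comp (hB.sub_const (1/6:ℝ)) (by norm_num)
  have big := ((((((e1.sub_const (2 * (1/2:ℝ) * Real.log (1/2 : ℝ))).add e3).sub
      e4).sub_const (2 * (1/6:ℝ) * Real.log (1/6 : ℝ))).sub e6).add e7).sub e8
  unfold Lfun
  refine big.congr_fderiv ?_
  refine ContinuousLinearMap.ext fun x => ?_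
  simp only [ContinuousLinearMap.add_apply, ContinuousLinearMap.sub_apply,
    ContinuousLinearMap.smul_apply, ContinuousLinearMap.coe_fst', ContinuousLinearMap.coe_snd',
    smul_eq_mul, cL]
  norm_num
  rw [log54, log34, log13, log14, log112, log95]
  ring

lemma hU_deriv : HasFDerivAt Ufun cL ((5/2:ℝ), (1:ℝ)) := by
  have hA : HasFDerivAt (fun p : ℝ × ℝ => (p.1 + 1 - p.2) * (2:ℝ)⁻¹)
      ((2:ℝ)⁻¹ • (ContinuousLinearMap.fst ℝ ℝ ℝ - ContinuousLinearMap.snd ℝ ℝ ℝ)) ((5/2:ℝ), (1:ℝ)) :=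
    ((hasFDerivAt_fst.add_const (1:ℝ)).sub hasFDerivAt_snd).mul_const ((2:ℝ)⁻¹)
  have hB : HasFDerivAt (fun p : ℝ × ℝ => (p.1 - 1 - p.2) * (2:ℝ)⁻¹)
      ((2:ℝ)⁻¹ • (ContinuousLinearMap.fst ℝ ℝ ℝ - ContinuousLinearMap.snd ℝ ℝ ℝ)) ((5/2:ℝ), (1:ℝ)) :=
    ((hasFDerivAt_fst.sub_const (1:ℝ)).sub hasFDerivAt_snd).mul_const ((2:ℝ)⁻¹)
  have big := ((hA.mul_const (Real.log (5/3))).add (hB.mul_const (Real.log 3))).add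
    (hasFDerivAt_snd.mul_const (Real.log 3))
  unfold Ufun
  refine big.congr_fderiv ?_
  refine ContinuousLinearMap.ext fun x => ?_
  simp only [ContinuousLinearMap.add_apply, ContinuousLinearMap.sub_apply,
    ContinuousLinearMap.smul_apply, ContinuousLinearMap.coe_fst', ContinuousLinearMap.coe_snd',
    smul_eq_mul, cL]
  norm_num
  rw [log53, log95]
  ring

lemma hL_pt : Lfun ((5/2:ℝ), (1:ℝ)) = (5/4) * Real.log 5 := by
  simp only [Lfun, fab]
  norm_num
  rw [log12, log54, log34, log16, log13, log14, log112]
  ring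

lemma hU_pt : Ufun ((5/2:ℝ), (1:ℝ)) = (5/4) * Real.log 5 := by
  simp only [Ufun]
  norm_num
  rw [log53]
  ring

lemma bounds_on (p : ℝ × ℝ) (h1 : 2/3 < p.2) (h2 : 1/2 < (p.1 + 1 - p.2) / 2)
    (h3 : 1/6 < (p.1 - 1 - p.2) / 2) : Lfun p ≤ Sfun p ∧ Sfun p ≤ Ufun p := by
  have hb : (0:ℝ) < p.2 := by linarith
  have hA : (0:ℝ) < (p.1 + 1 - p.2) / 2 := by linarith
  have hB : (0:ℝ) < (p.1 - 1 - p.2) / 2 := by linarith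
  have hmem : ((1/2 : ℝ), (1/6 : ℝ)) ∈ Dab p.1 p.2 := by
    refine ⟨by norm_num, by norm_num, by simp only; linarith, ?_, ?_⟩
    · simp only; linarith
    · simp only; linarith
  have hub : ∀ y ∈ fab p.1 p.2 '' Dab p.1 p.2, y ≤ Ufun p := by
    rintro y ⟨q, hq, rfl⟩
    exact fab_le_U p.1 p.2 hb hA hB q hq
  have hbdd : BddAbove (fab p.1 p.2 '' Dab p.1 p.2) := ⟨Ufun p, fun y hy => hub y hy⟩
  constructor
  · exact le_csSup hbdd (Set.mem_image_of_mem _ hmem)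
  · exact csSup_le ⟨_, Set.mem_image_of_mem _ hmem⟩ hub

lemma ev_bounds : ∀ᶠ p in nhds ((5/2:ℝ), (1:ℝ)), Lfun p ≤ Sfun p ∧ Sfun p ≤ Ufun p := by
  have c1 : ContinuousAt (fun p : ℝ × ℝ => p.2) ((5/2:ℝ), (1:ℝ)) := continuous_snd.continuousAt
  have c2 : ContinuousAt (fun p : ℝ × ℝ => (p.1 + 1 - p.2) / 2) ((5/2:ℝ), (1:ℝ)) := by fun_prop
  have c3 : ContinuousAt (fun p : ℝ × ℝ => (p.1 - 1 - p.2) / 2) ((5/2:ℝ), (1:ℝ)) := by fun_prop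
  have h1 := (continuousAt_const (y := (2/3:ℝ))).eventually_lt c1 (by norm_num)
  have h2 := (continuousAt_const (y := (1/2:ℝ))).eventually_lt c2 (by norm_num)
  have h3 := (continuousAt_const (y := (1/6:ℝ))).eventually_lt c3 (by norm_num)
  filter_upwards [h1, h2, h3] with p hp1 hp2 hp3
  exact bounds_on p hp1 hp2 hp3

lemma hS_pt : Sfun ((5/2:ℝ), (1:ℝ)) = (5/4) * Real.log 5 := by
  have h := bounds_on ((5/2:ℝ), (1:ℝ)) (by norm_num) (by norm_num) (by norm_num)
  rw [hL_pt] at h; rw [hU_pt] at h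
  linarith [h.1, h.2]

lemma hS_deriv : HasFDerivAt Sfun cL ((5/2:ℝ), (1:ℝ)) := by
  have oL := hL_deriv.isLittleO
  have oU := hU_deriv.isLittleO
  have hLUpt : Lfun ((5/2:ℝ), (1:ℝ)) = Ufun ((5/2:ℝ), (1:ℝ)) := by rw [hL_pt, hU_pt]
  have hSLpt : Sfun ((5/2:ℝ), (1:ℝ)) = Lfun ((5/2:ℝ), (1:ℝ)) := by
    rw [hS_pt, hL_pt]
  have oUL : (fun p : ℝ × ℝ => Ufun p - Lfun p) =o[nhds ((5/2:ℝ), (1:ℝ))]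
      (fun p => p - ((5/2:ℝ), (1:ℝ))) := by
    have h := oU.sub oL
    have : (fun p : ℝ × ℝ => Ufun p - Lfun p)
        = fun p => (Ufun p - Ufun ((5/2:ℝ), (1:ℝ)) - cL (p - ((5/2:ℝ), (1:ℝ))))
          - (Lfun p - Lfun ((5/2:ℝ), (1:ℝ)) - cL (p - ((5/2:ℝ), (1:ℝ)))) := by
      funext p; rw [hLUpt]; ring
    rw [this]; exact h
  have oSL : (fun p : ℝ × ℝ => Sfun p - Lfun p) =o[nhds ((5/2:ℝ), (1:ℝ))]
      (fun p => p - ((5/2:ℝ), (1:ℝ))) := by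
    refine Asymptotics.IsBigO.trans_isLittleO ?_ oUL
    rw [Asymptotics.isBigO_iff]
    refine ⟨1, ?_⟩
    filter_upwards [ev_bounds] with p hp
    rw [one_mul, Real.norm_eq_abs, Real.norm_eq_abs]
    rw [abs_of_nonneg (by linarith [hp.1]), abs_of_nonneg (by linarith [hp.1, hp.2])]
    linarith [hp.2]
  have oS : (fun p : ℝ × ℝ => Sfun p - Sfun ((5/2:ℝ), (1:ℝ)) - cL (p - ((5/2:ℝ), (1:ℝ))))
      =o[nhds ((5/2:ℝ), (1:ℝ))] (fun p => p - ((5/2:ℝ), (1:ℝ))) := by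
    have h := oSL.add oL
    have : (fun p : ℝ × ℝ => Sfun p - Sfun ((5/2:ℝ), (1:ℝ)) - cL (p - ((5/2:ℝ), (1:ℝ))))
        = fun p => (Sfun p - Lfun p)
          + (Lfun p - Lfun ((5/2:ℝ), (1:ℝ)) - cL (p - ((5/2:ℝ), (1:ℝ)))) := by
      funext p; rw [hSLpt]; ring
    rw [this]; exact h
  exact HasFDerivAt.of_isLittleO oS

end Aux

theorem stmt5 :
    DifferentiableAt ℝ (fun p : ℝ × ℝ => kappa p.1 p.2) ((5 / 2 : ℝ), (1 : ℝ)) ∧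
    fderiv ℝ (fun p : ℝ × ℝ => kappa p.1 p.2) ((5 / 2 : ℝ), (1 : ℝ)) (1, 0) = 0 ∧
    (5 / 2 : ℝ) * fderiv ℝ (fun p : ℝ × ℝ => kappa p.1 p.2) ((5 / 2 : ℝ), (1 : ℝ)) (0, 1)
      = (1 / 2) * Real.log (9 / 5) := by
  have hept : ((5/2:ℝ), (1:ℝ)) = ((5 / 2 : ℝ), (1 : ℝ)) := rfl
  have hinv1 : HasDerivAt (fun x : ℝ => 1 / x) (-(((5/2:ℝ))^2)⁻¹) ((((5/2:ℝ), (1:ℝ))).1) := by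
    simpa [one_div] using hasDerivAt_inv (show (5/2:ℝ) ≠ 0 by norm_num)
  have hinv : HasFDerivAt (fun p : ℝ × ℝ => 1 / p.1)
      ((-(((5/2:ℝ))^2)⁻¹) • ContinuousLinearMap.fst ℝ ℝ ℝ) ((5/2:ℝ), (1:ℝ)) :=
    hinv1.comp_hasFDerivAt ((5/2:ℝ), (1:ℝ)) hasFDerivAt_fst
  have hK := hinv.mul hS_deriv
  have hfun : (fun p : ℝ × ℝ => kappa p.1 p.2) = (fun p : ℝ × ℝ => (1 / p.1) * Sfun p) := rfl
  rw [hfun]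
  have hD := hK.differentiableAt
  refine ⟨hD, ?_, ?_⟩
  · rw [show (fun p : ℝ × ℝ => 1 / p.1 * Sfun p) = (fun p : ℝ × ℝ => 1 / p.1) * Sfun from rfl, hK.fderiv]
    simp only [ContinuousLinearMap.add_apply, ContinuousLinearMap.smul_apply,
      ContinuousLinearMap.coe_fst', ContinuousLinearMap.coe_snd', smul_eq_mul, cL, hS_pt]
    norm_num
    ring
  · rw [show (fun p : ℝ × ℝ => 1 / p.1 * Sfun p) = (fun p : ℝ × ℝ => 1 / p.1) * Sfun from rfl, hK.fderiv]
    simp only [ContinuousLinearMap.add_apply, ContinuousLinearMap.smul_apply,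
      ContinuousLinearMap.coe_fst', ContinuousLinearMap.coe_snd', smul_eq_mul, cL, hS_pt]
    norm_num
    ring
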